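/- Let A be a Fitting category that is triangulated and F : A → B a triangle functor satisfying condition (I). Then the Verdier quotient functor V_F : A → A/Ker(F) is full. -/

import Mathlib

open CategoryTheory CategoryTheory.Limits CategoryTheory.Pretriangulated

universe v₁ v₂ u₁ u₂

variable {A : Type u₁} {B : Type u₂} [Category.{v₁} A] [Category.{v₂} B]
  [Preadditive A] [Preadditive B] [HasZeroObject A] [HasZeroObject B]
  [HasShift A ℤ] [HasShift B ℤ]
  [∀ n : ℤ, (shiftFunctor A n).Additive] [∀ n : ℤ, (shiftFunctor B n).Additive]
  [Pretriangulated A] [Pretriangulated B] [IsTriangulated A] [IsTriangulated B]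

variable [HasBinaryBiproducts A]

private lemma aux_isZero {C D : Type*} [Category C] [Category D] [Preadditive C]
    [Preadditive D] (F : C ⥤ D) [F.Additive] {X : C} (a : CategoryTheory.End X) (n : ℕ)
    (ha : a ^ n = 0) (hFa : F.map (a : X ⟶ X) = 𝟙 (F.obj X)) :
    IsZero (F.obj X) := by
  rw [IsZero.iff_id_eq_zero]
  have key : ∀ m : ℕ, F.map ((a ^ m : CategoryTheory.End X) : X ⟶ X) = 𝟙 (F.obj X) := by
    intro m
    induction m with
    | zero => exact F.map_id X
    | succ m ih =>
      have : ((a ^ (m + 1) : CategoryTheory.End X) : X ⟶ X) =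
          (a : X ⟶ X) ≫ ((a ^ m : CategoryTheory.End X) : X ⟶ X) := by
        rw [pow_succ]; rfl
      rw [this, F.map_comp, hFa, ih, Category.id_comp]
  have h0 : F.map ((a ^ n : CategoryTheory.End X) : X ⟶ X) = 0 := by
    rw [ha]; exact F.map_zero _ _
  rw [key n] at h0
  exact h0

theorem stmt16 (F : A ⥤ B) [F.CommShift ℤ] [F.IsTriangulated]
    (S : ObjectProperty A) [S.IsTriangulated] (hS : ∀ X : A, S X ↔ IsZero (F.obj X))
    (Ft : S.trW.Localization ⥤ B) (e : S.trW.Q ⋙ Ft ≅ F)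
    (hFitting : ∀ (X : A) (a : X ⟶ X), ∃ (X' X'' : A) (e : X ≅ X' ⊞ X'')
      (a' : X' ⟶ X') (a'' : X'' ⟶ X''), IsIso a' ∧ IsNilpotent (show CategoryTheory.End X'' from a'') ∧
        a = e.hom ≫ biprod.map a' a'' ≫ e.inv)
    (hI : ∀ (X Y : A) (u : X ⟶ Y), IsIso (F.map u) →
      ∃ u' : Y ⟶ X, F.map u ≫ F.map u' = 𝟙 (F.obj X) ∧
        F.map u' ≫ F.map u = 𝟙 (F.obj Y)) :
    S.trW.Q.Full := by
  set L := S.trW.Q with hL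
  -- Key claim: for every s ∈ S.trW, there is t with L.map t ≫ L.map s = 𝟙
  have key : ∀ ⦃Y Y' : A⦄ (s : Y ⟶ Y'), S.trW s →
      ∃ t : Y' ⟶ Y, L.map t ≫ L.map s = 𝟙 (L.obj Y') := by
    intro Y Y' s hs
    have hsiso : IsIso (L.map s) := Localization.inverts L S.trW s hs
    -- F.map s is an isomorphism
    obtain ⟨Z, g, h, hT, memZ⟩ := hs
    have hFZ : IsZero (F.obj Z) := (hS Z).1 memZ
    have hFT := F.map_distinguished _ hT
    have hFs : IsIso (F.map s) := (Triangle.isZero₃_iff_isIso₁ _ hFT).1 (by exact hFZ)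
    obtain ⟨u', hu1, hu2⟩ := hI _ _ s hFs
    -- Fitting decomposition of b := u' ≫ s
    obtain ⟨Z₁, Z₂, e', b₁, b₂, hb₁, ⟨n, hn⟩, hb⟩ := hFitting Y' (u' ≫ s)
    have hFb : F.map (u' ≫ s) = 𝟙 (F.obj Y') := by rw [F.map_comp, hu2]
    -- F.map b₂ = 𝟙
    have hFb₂ : F.map b₂ = 𝟙 (F.obj Z₂) := by
      obtain ⟨b, hbdef⟩ : ∃ b, u' ≫ s = b := ⟨_, rfl⟩
      rw [hbdef] at hb hFb
      have h1 : b₂ = (biprod.inr ≫ e'.inv) ≫ b ≫ (e'.hom ≫ biprod.snd) := by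
        rw [hb]; simp
      rw [h1]
      simp only [F.map_comp]
      rw [hFb, Category.id_comp]
      simp only [← F.map_comp]
      have h2 : ((biprod.inr : Z₂ ⟶ Z₁ ⊞ Z₂) ≫ e'.inv) ≫ e'.hom ≫ biprod.snd = 𝟙 Z₂ := by
        simp
      rw [h2, F.map_id]
    -- Z₂ ∈ S
    have hZ₂ : S Z₂ := by
      rw [hS]
      exact aux_isZero F (show CategoryTheory.End Z₂ from b₂) n hn hFb₂
    -- j := inl ≫ e'.inv is in W
    have hinl : S.trW (biprod.inl : Z₁ ⟶ Z₁ ⊞ Z₂) :=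
      ObjectProperty.trW.mk S (binaryBiproductTriangle_distinguished Z₁ Z₂) hZ₂
    have hj : S.trW ((biprod.inl : Z₁ ⟶ Z₁ ⊞ Z₂) ≫ e'.inv) :=
      S.trW.comp_mem _ _ hinl (S.trW_of_isIso e'.inv)
    have hjiso : IsIso (L.map ((biprod.inl : Z₁ ⟶ Z₁ ⊞ Z₂) ≫ e'.inv)) :=
      Localization.inverts L S.trW _ hj
    -- q := e'.hom ≫ fst satisfies j ≫ q = 𝟙, hence L.map q ≫ L.map j = 𝟙
    have hjq : L.map ((biprod.inl : Z₁ ⟶ Z₁ ⊞ Z₂) ≫ e'.inv) ≫ L.map (e'.hom ≫ biprod.fst)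
        = 𝟙 (L.obj Z₁) := by
      rw [← L.map_comp]
      have h3 : ((biprod.inl : Z₁ ⟶ Z₁ ⊞ Z₂) ≫ e'.inv) ≫ (e'.hom ≫ biprod.fst) = 𝟙 Z₁ := by
        simp
      rw [h3, L.map_id]
    have hq_eq : L.map (e'.hom ≫ biprod.fst)
        = CategoryTheory.inv (L.map ((biprod.inl : Z₁ ⟶ Z₁ ⊞ Z₂) ≫ e'.inv)) :=
      IsIso.eq_inv_of_hom_inv_id hjq
    have hqj : L.map (e'.hom ≫ biprod.fst) ≫ L.map ((biprod.inl : Z₁ ⟶ Z₁ ⊞ Z₂) ≫ e'.inv)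
        = 𝟙 (L.obj Y') := by
      rw [hq_eq, IsIso.inv_hom_id]
    -- the morphism t
    refine ⟨e'.hom ≫ biprod.fst ≫ CategoryTheory.inv b₁ ≫ biprod.inl ≫ e'.inv ≫ u', ?_⟩
    have hts : (e'.hom ≫ biprod.fst ≫ CategoryTheory.inv b₁ ≫ biprod.inl ≫ e'.inv ≫ u') ≫ s
        = (e'.hom ≫ biprod.fst) ≫ ((biprod.inl : Z₁ ⟶ Z₁ ⊞ Z₂) ≫ e'.inv) := by
      simp only [Category.assoc]
      rw [hb]
      simp [biprod.inl_map_assoc]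
    rw [← L.map_comp, hts, L.map_comp, hqj]
  constructor
  intro X Y f
  obtain ⟨φ, hφ⟩ := Localization.exists_leftFraction L S.trW f
  obtain ⟨t, ht1⟩ := key φ.s φ.hs
  have hsiso : IsIso (L.map φ.s) := Localization.inverts L S.trW _ φ.hs
  have htinv : L.map t = CategoryTheory.inv (L.map φ.s) :=
    IsIso.eq_inv_of_inv_hom_id ht1
  refine ⟨φ.f ≫ t, ?_⟩
  rw [L.map_comp, htinv, hφ]
  rfl
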